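/- Let q = 2^(2m+1) with m ≥ 1, and let W be the group of matrices w(a,b) over GF(q) (as in the Suzuki group's Sylow 2-subgroup) with multiplication w(a,b)·w(c,d) = w(a+c, b+d+π(a)·c), where π(x) = x^(2^(m+1)). Then the elements of order 2 in W are exactly the elements w(0,b) with b ≠ 0, so W contains exactly q − 1 involutions. -/
import Mathlib

/-- Let `q = 2^(2m+1)`, `m ≥ 1`, `F = GF(q)`, and let `W` be the group on `F × F` with
multiplication `(a,b)·(c,d) = (a+c, b+d+π(a)c)`, where `π(x) = x^(2^(m+1))`.
Then the elements of order `2` in `W` are exactly the `(0,b)` with `b ≠ 0`, so `W`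
contains exactly `q - 1` involutions. -/
theorem stmt_5 (m : ℕ) (hm : 1 ≤ m) (F : Type*) [Field F] [Fintype F]
    (hF : Fintype.card F = 2 ^ (2 * m + 1))
    (W : Type*) [Group W] [Fintype W] (e : W ≃ F × F)
    (he : ∀ x y : W, e (x * y) =
      ((e x).1 + (e y).1, (e x).2 + (e y).2 + (e x).1 ^ (2 ^ (m + 1)) * (e y).1)) :
    {x : W | orderOf x = 2} = {x : W | (e x).1 = 0 ∧ (e x).2 ≠ 0} ∧
      Nat.card {x : W | orderOf x = 2} = 2 ^ (2 * m + 1) - 1 := by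
  have h2 : (2 : F) = 0 := by
    have h := FiniteField.cast_card_eq_zero F
    rw [hF] at h
    push_cast at h
    exact pow_eq_zero_iff (by omega) |>.mp h
  have hself : ∀ a : F, a + a = 0 := by
    intro a; have : a + a = 2 * a := by ring
    rw [this, h2, zero_mul]
  have he1 : e 1 = (0, 0) := by
    have h := he 1 1
    rw [mul_one] at h
    rw [Prod.ext_iff] at h
    obtain ⟨h1, hh2⟩ := h
    have h1' : (e 1).1 = 0 := left_eq_add.mp h1
    have h2'' : (e 1).2 = 0 := by
      rw [h1'] at hh2
      simp only [zero_pow (by positivity : 2 ^ (m+1) ≠ 0), zero_mul, add_zero] at hh2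
      exact left_eq_add.mp hh2
    exact Prod.ext_iff.mpr ⟨h1', h2''⟩
  have hsq : ∀ x : W, (x ^ 2 = 1 ↔ (e x).1 = 0) := by
    intro x
    rw [pow_two]
    constructor
    · intro h
      have h' := he x x
      rw [h, he1] at h'
      rw [Prod.mk.injEq] at h'
      obtain ⟨-, h2'⟩ := h'
      rw [hself, zero_add] at h2'
      rcases mul_eq_zero.mp h2'.symm with hc | hc
      · exact pow_eq_zero_iff (by positivity) |>.mp hc
      · exact hc
    · intro h
      apply e.injective
      rw [he x x, he1, h]
      simp [hself]
  have hord : ∀ x : W, orderOf x = 2 ↔ ((e x).1 = 0 ∧ (e x).2 ≠ 0) := by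
    intro x
    constructor
    · intro h
      have hx2 : x ^ 2 = 1 := by rw [← h]; exact pow_orderOf_eq_one x
      have hx1 : x ≠ 1 := by rintro rfl; simp at h
      have ha := (hsq x).mp hx2
      refine ⟨ha, fun hb => hx1 ?_⟩
      apply e.injective; rw [he1]; exact Prod.ext_iff.mpr ⟨ha, hb⟩
    · rintro ⟨ha, hb⟩
      have hx1 : x ≠ 1 := by
        intro h; rw [h, he1] at hb; exact hb rfl
      exact orderOf_eq_prime ((hsq x).mpr ha) hx1
  have hseteq : {x : W | orderOf x = 2} = {x : W | (e x).1 = 0 ∧ (e x).2 ≠ 0} := by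
    ext x; exact hord x
  refine ⟨hseteq, ?_⟩
  rw [hseteq]
  have eqv : {x : W | (e x).1 = 0 ∧ (e x).2 ≠ 0} ≃ {b : F // b ≠ 0} :=
    { toFun := fun p => ⟨(e p.1).2, p.2.2⟩
      invFun := fun b => ⟨e.symm (0, b.1), by simp [Set.mem_setOf_eq, b.2]⟩
      left_inv := fun p => by
        apply Subtype.ext
        apply e.injective
        simp only [Equiv.apply_symm_apply]
        exact Prod.ext_iff.mpr ⟨p.2.1.symm, rfl⟩
      right_inv := fun b => by simp }
  rw [Nat.card_congr eqv, ← hF]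
  classical
  rw [Nat.card_eq_fintype_card, Fintype.card_subtype_compl, Fintype.card_subtype_eq]
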